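/- Let $\{\chi_{k}\}_{k\geq 1}$ be the points (second coordinates) of a unit-rate Poisson process $\{(\sigma_k, \chi_k)\}$ on $\mathbb{R}_+^2$ restricted to $\sigma_k \leq 1$, and let $g : \mathbb{R}_+ \to [0,\infty)$ be measurable. Then $\mathbb{E}\left[\min\Big(1, \sum_k g(\chi_k)\mathbf{1}[\sigma_k \leq 1]\Big)\right] < \infty$ always, and this expectation is comparable within a factor of 2 to $\psi\left(\int_0^\infty \psi(g(y))\,dy\right)$ where $\psi(x) = 1 - e^{-x}$: specifically, $\psi\left(\int_0^\infty \psi(g(y))\,dy\right) \leq \mathbb{E}[\min(1, \eta g)] \leq 2\,\psi\left(\int_0^\infty \psi(g(y))\,dy\right)$, where $\eta g = \sum_k g(\chi_k)\mathbf{1}[\sigma_k \leq 1]$. -/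

import Mathlib

open MeasureTheory ProbabilityTheory Set
open scoped ENNReal NNReal

/-- Probability that a Poisson random variable with mean `r` equals `k`
(junk value for `r = ∞`). -/
noncomputable def poissonProb (r : ℝ≥0∞) (k : ℕ) : ℝ≥0∞ :=
  ENNReal.ofReal (Real.exp (-r.toReal) * r.toReal ^ k / (Nat.factorial k))

/-- `N` is a Poisson point process (random measure) on `E` with intensity
measure `μ`, under the probability measure `P`: counts of disjoint sets are
independent, and the count of any set of finite intensity is Poisson
distributed with the corresponding mean. -/
def IsPoissonPP {Ω E : Type*} [MeasurableSpace Ω] [MeasurableSpace E]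
    (P : Measure Ω) (μ : Measure E) (N : Ω → Measure E) : Prop :=
  (∀ A : Set E, MeasurableSet A → Measurable fun ω => N ω A) ∧
  (∀ A : Set E, MeasurableSet A → μ A ≠ ∞ → ∀ k : ℕ,
      P {ω | N ω A = (k : ℝ≥0∞)} = poissonProb (μ A) k) ∧
  (∀ (n : ℕ) (A : Fin n → Set E), (∀ i, MeasurableSet (A i)) →
      Pairwise (Function.onFun Disjoint A) →
      iIndepFun (fun i ω => N ω (A i)) P)

/-- `ψ(t) = 1 - e^{-t}`, extended to `ℝ≥0∞` by `ψ(∞) = 1`. -/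
noncomputable def epsi (t : ℝ≥0∞) : ℝ≥0∞ :=
  if t = ∞ then 1 else ENNReal.ofReal (1 - Real.exp (-t.toReal))

namespace PoissonAux

open Filter Topology

/-- `e^{-t}` extended by `0` at `∞`. -/
noncomputable def nexp (t : ℝ≥0∞) : ℝ≥0∞ :=
  if t = ∞ then 0 else ENNReal.ofReal (Real.exp (-t.toReal))

lemma nexp_of_ne_top {t : ℝ≥0∞} (ht : t ≠ ∞) :
    nexp t = ENNReal.ofReal (Real.exp (-t.toReal)) := if_neg ht

lemma nexp_le_one (t : ℝ≥0∞) : nexp t ≤ 1 := by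
  rw [nexp]
  split
  · exact zero_le_one
  · rw [← ENNReal.ofReal_one]
    refine ENNReal.ofReal_le_ofReal ?_
    rw [← Real.exp_zero]
    exact Real.exp_le_exp.2 (neg_nonpos.2 ENNReal.toReal_nonneg)

lemma nexp_ne_top (t : ℝ≥0∞) : nexp t ≠ ∞ :=
  (lt_of_le_of_lt (nexp_le_one t) ENNReal.one_lt_top).ne

lemma nexp_zero : nexp 0 = 1 := by simp [nexp]

lemma nexp_add (a b : ℝ≥0∞) : nexp (a + b) = nexp a * nexp b := by
  rcases eq_or_ne a ∞ with ha | ha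
  · simp [ha, nexp]
  rcases eq_or_ne b ∞ with hb | hb
  · simp [hb, nexp, ENNReal.add_eq_top]
  rw [nexp_of_ne_top ha, nexp_of_ne_top hb, nexp_of_ne_top (by simp [ENNReal.add_eq_top, ha, hb]),
    ENNReal.toReal_add ha hb, neg_add, Real.exp_add,
    ENNReal.ofReal_mul (Real.exp_nonneg _)]

lemma nexp_sum {ι : Type*} (s : Finset ι) (f : ι → ℝ≥0∞) :
    nexp (∑ i ∈ s, f i) = ∏ i ∈ s, nexp (f i) := by
  classical
  induction s using Finset.induction_on with
  | empty => simp [nexp_zero]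
  | insert _ _ h ih => rw [Finset.sum_insert h, Finset.prod_insert h, nexp_add, ih]

lemma epsi_eq (t : ℝ≥0∞) : epsi t = 1 - nexp t := by
  rcases eq_or_ne t ∞ with ht | ht
  · simp [ht, epsi, nexp]
  · rw [epsi, if_neg ht, nexp_of_ne_top ht,
      ENNReal.ofReal_sub _ (Real.exp_nonneg _), ENNReal.ofReal_one]

lemma epsi_zero : epsi 0 = 0 := by rw [epsi_eq, nexp_zero, tsub_self]

lemma epsi_le_one (t : ℝ≥0∞) : epsi t ≤ 1 := by
  rw [epsi_eq]; exact tsub_le_self.trans_eq (by simp)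

lemma one_sub_epsi (t : ℝ≥0∞) : 1 - epsi t = nexp t := by
  rw [epsi_eq, ENNReal.sub_sub_cancel ENNReal.one_ne_top (nexp_le_one t)]

lemma nexp_anti : Antitone nexp := by
  intro a b hab
  rcases eq_or_ne b ∞ with hb | hb
  · simp [hb, nexp]
  have ha : a ≠ ∞ := fun h => hb (top_le_iff.1 (h ▸ hab))
  rw [nexp_of_ne_top ha, nexp_of_ne_top hb]
  exact ENNReal.ofReal_le_ofReal (Real.exp_le_exp.2 (neg_le_neg
    (ENNReal.toReal_mono hb hab)))

lemma epsi_mono : Monotone epsi := by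
  intro a b hab
  rw [epsi_eq, epsi_eq]
  exact tsub_le_tsub le_rfl (nexp_anti hab)

lemma epsi_le_self (t : ℝ≥0∞) : epsi t ≤ t := by
  rcases eq_or_ne t ∞ with ht | ht
  · simp [ht]
  rw [epsi, if_neg ht]
  calc ENNReal.ofReal (1 - Real.exp (-t.toReal)) ≤ ENNReal.ofReal t.toReal := by
        refine ENNReal.ofReal_le_ofReal ?_
        have := Real.add_one_le_exp (-t.toReal)
        linarith
    _ = t := ENNReal.ofReal_toReal ht

lemma exp_neg_le (x : ℝ) (hx0 : 0 ≤ x) (hx1 : x ≤ 1) :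
    Real.exp (-x) ≤ 1 - x / 2 := by
  have h2e : (2 : ℝ) ≤ Real.exp 1 := by
    have := Real.add_one_le_exp 1; linarith
  have hconv := convexOn_exp.2 (mem_univ (0 : ℝ)) (mem_univ (-1 : ℝ))
    (by linarith : (0:ℝ) ≤ 1 - x) hx0 (by ring : (1 - x) + x = 1)
  simp only [smul_eq_mul, mul_zero, zero_add, Real.exp_zero, mul_one, mul_neg_one] at hconv
  have hinv : Real.exp (-1) ≤ 1 / 2 := by
    rw [Real.exp_neg, ← one_div]
    exact one_div_le_one_div_of_le (by norm_num) h2e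
  nlinarith [Real.exp_pos (-1)]

lemma min_le_two_epsi (t : ℝ≥0∞) : min 1 t ≤ 2 * epsi t := by
  rcases le_total t 1 with h | h
  · rw [min_eq_right h]
    have ht : t ≠ ∞ := (h.trans_lt ENNReal.one_lt_top).ne
    rw [epsi, if_neg ht]
    have hx0 : 0 ≤ t.toReal := ENNReal.toReal_nonneg
    have hx1 : t.toReal ≤ 1 := by
      rw [← ENNReal.toReal_one]; exact ENNReal.toReal_mono ENNReal.one_ne_top h
    have key : t.toReal ≤ 2 * (1 - Real.exp (-t.toReal)) := by
      have := exp_neg_le t.toReal hx0 hx1; linarith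
    calc t = ENNReal.ofReal t.toReal := (ENNReal.ofReal_toReal ht).symm
      _ ≤ ENNReal.ofReal (2 * (1 - Real.exp (-t.toReal))) := ENNReal.ofReal_le_ofReal key
      _ = 2 * ENNReal.ofReal (1 - Real.exp (-t.toReal)) := by
          rw [ENNReal.ofReal_mul (by norm_num), ENNReal.ofReal_ofNat]
  · rw [min_eq_left h]
    have h12 : (2 : ℝ≥0∞)⁻¹ ≤ epsi 1 := by
      rw [epsi, if_neg ENNReal.one_ne_top]
      have h2e : (2 : ℝ) ≤ Real.exp 1 := by
        have := Real.add_one_le_exp 1; linarith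
      have : Real.exp (-(1 : ℝ≥0∞).toReal) ≤ 1 / 2 := by
        simp only [ENNReal.toReal_one, Real.exp_neg]
        rw [← one_div]
        exact one_div_le_one_div_of_le (by norm_num) h2e
      calc (2 : ℝ≥0∞)⁻¹ = ENNReal.ofReal (1 / 2) := by
            rw [ENNReal.ofReal_div_of_pos (by norm_num), ENNReal.ofReal_one,
              ENNReal.ofReal_ofNat, one_div]
        _ ≤ _ := ENNReal.ofReal_le_ofReal (by linarith)
    calc (1 : ℝ≥0∞) = 2 * 2⁻¹ := by
          rw [ENNReal.mul_inv_cancel (by norm_num) (by norm_num)]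
      _ ≤ 2 * epsi t := mul_le_mul_right (h12.trans (epsi_mono h)) 2
  
lemma epsi_le_min (t : ℝ≥0∞) : epsi t ≤ min 1 t :=
  le_min (epsi_le_one t) (epsi_le_self t)

lemma measurable_nexp : Measurable nexp := by
  unfold nexp
  exact Measurable.ite (measurableSet_singleton ∞) measurable_const
    (ENNReal.measurable_ofReal.comp
      ((Real.measurable_exp.comp measurable_neg).comp ENNReal.measurable_toReal))

lemma measurable_epsi : Measurable epsi := by
  have : epsi = fun t => 1 - nexp t := funext epsi_eq
  rw [this]
  exact (measurable_const.sub measurable_nexp)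


lemma iSup_min {a b : ℕ → ℝ≥0∞} (ha : Monotone a) (hb : Monotone b) :
    ⨆ n, min (a n) (b n) = min (⨆ n, a n) (⨆ n, b n) := by
  refine le_antisymm (iSup_le fun n => min_le_min (le_iSup a n) (le_iSup b n)) ?_
  by_contra hlt
  push_neg at hlt
  set c := ⨆ n, min (a n) (b n) with hc
  have hca : c < ⨆ n, a n := hlt.trans_le (min_le_left _ _)
  have hcb : c < ⨆ n, b n := hlt.trans_le (min_le_right _ _)
  obtain ⟨n, hn⟩ := lt_iSup_iff.1 hca
  obtain ⟨m, hm⟩ := lt_iSup_iff.1 hcb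
  have : c < min (a (max n m)) (b (max n m)) :=
    lt_min (hn.trans_le (ha (le_max_left n m))) (hm.trans_le (hb (le_max_right n m)))
  exact absurd (this.trans_le (le_iSup (fun k => min (a k) (b k)) (max n m))) (lt_irrefl c).elim

lemma tendsto_epsi_nhds {t : ℝ≥0∞} (ht : t ≠ ∞) :
    Tendsto epsi (𝓝 t) (𝓝 (epsi t)) := by
  have h1 : Tendsto (fun s : ℝ≥0∞ => ENNReal.ofReal (1 - Real.exp (-s.toReal))) (𝓝 t)
      (𝓝 (ENNReal.ofReal (1 - Real.exp (-t.toReal)))) := by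
    have h0 := ENNReal.tendsto_toReal ht
    have h2 : Tendsto (fun x : ℝ => 1 - Real.exp (-x)) (𝓝 t.toReal)
        (𝓝 (1 - Real.exp (-t.toReal))) := Continuous.tendsto (by continuity) _
    exact (ENNReal.continuous_ofReal.continuousAt.tendsto).comp (h2.comp h0)
  have heq : ∀ᶠ s in 𝓝 t, epsi s = ENNReal.ofReal (1 - Real.exp (-s.toReal)) := by
    filter_upwards [isOpen_ne.eventually_mem (show t ∈ {s : ℝ≥0∞ | s ≠ ∞} from ht)] with s hs
    exact if_neg hs
  rw [show epsi t = ENNReal.ofReal (1 - Real.exp (-t.toReal)) from if_neg ht]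
  exact h1.congr' (heq.mono fun s h => h.symm)

lemma epsi_iSup {u : ℕ → ℝ≥0∞} (hu : Monotone u) :
    ⨆ n, epsi (u n) = epsi (⨆ n, u n) := by
  have hmono : Monotone fun n => epsi (u n) := epsi_mono.comp hu
  rcases eq_or_ne (⨆ n, u n) ∞ with hs | hs
  · rw [hs]
    refine le_antisymm (by simpa [epsi] using fun n => epsi_le_one (u n)) ?_
    have hk : ∀ k : ℕ, epsi (k : ℝ≥0∞) ≤ ⨆ n, epsi (u n) := by
      intro k
      have : (k : ℝ≥0∞) < ⨆ n, u n := hs ▸ ENNReal.natCast_lt_top k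
      obtain ⟨n, hn⟩ := lt_iSup_iff.1 this
      exact (epsi_mono hn.le).trans (le_iSup (fun n => epsi (u n)) n)
    have hlim : Tendsto (fun k : ℕ => epsi (k : ℝ≥0∞)) atTop (𝓝 1) := by
      have h1 : Tendsto (fun k : ℕ => Real.exp (-((k : ℝ≥0∞).toReal))) atTop (𝓝 0) := by
        simp only [ENNReal.toReal_natCast]
        exact Real.tendsto_exp_neg_atTop_nhds_zero.comp tendsto_natCast_atTop_atTop
      have h2 : Tendsto (fun k : ℕ => ENNReal.ofReal (1 - Real.exp (-((k : ℝ≥0∞).toReal))))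
          atTop (𝓝 (ENNReal.ofReal 1)) := by
        apply ENNReal.continuous_ofReal.continuousAt.tendsto.comp
        simpa using tendsto_const_nhds.sub h1
      rw [ENNReal.ofReal_one] at h2
      refine h2.congr fun k => ?_
      exact (if_neg (ENNReal.natCast_ne_top k)).symm
    have hmono' : Monotone fun k : ℕ => epsi (k : ℝ≥0∞) :=
      epsi_mono.comp (fun i j h => by exact_mod_cast Nat.cast_le.2 h)
    have := tendsto_nhds_unique (tendsto_atTop_iSup hmono') hlim
    show (1 : ℝ≥0∞) ≤ _
    rw [show (1:ℝ≥0∞) = ⨆ k : ℕ, epsi (k : ℝ≥0∞) from this.symm]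
    exact iSup_le hk
  · have hlim : Tendsto (fun n => epsi (u n)) atTop (𝓝 (epsi (⨆ n, u n))) :=
      (tendsto_epsi_nhds hs).comp (tendsto_atTop_iSup hu)
    exact tendsto_nhds_unique (tendsto_atTop_iSup hmono) hlim


lemma real_exp_tsum (x : ℝ) : Real.exp x = ∑' n : ℕ, x ^ n / n.factorial := by
  rw [Real.exp_eq_exp_ℝ, NormedSpace.exp_eq_tsum_div]

lemma tsum_poissonProb {r : ℝ≥0∞} (hr : r ≠ ∞) : ∑' k, poissonProb r k = 1 := by
  set lam := r.toReal with hlam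
  have hsum : Summable fun k : ℕ => Real.exp (-lam) * (lam ^ k / k.factorial) :=
    (Real.summable_pow_div_factorial lam).mul_left _
  have heq : (fun k : ℕ => Real.exp (-lam) * lam ^ k / (k.factorial : ℝ)) =
      fun k : ℕ => Real.exp (-lam) * (lam ^ k / k.factorial) := by
    funext k; ring
  calc ∑' k, poissonProb r k
      = ∑' k, ENNReal.ofReal (Real.exp (-lam) * (lam ^ k / k.factorial)) := by
        unfold poissonProb; rw [← hlam]; exact tsum_congr fun k => by rw [mul_div_assoc]
    _ = ENNReal.ofReal (∑' k, Real.exp (-lam) * (lam ^ k / k.factorial)) :=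
        (ENNReal.ofReal_tsum_of_nonneg (fun k => by positivity) hsum).symm
    _ = 1 := by
        rw [(Real.summable_pow_div_factorial lam).tsum_mul_left (Real.exp (-lam)),
          ← real_exp_tsum, ← Real.exp_add]
        simp

lemma mgf_single {Ω E : Type*} [MeasurableSpace Ω] [MeasurableSpace E]
    {P : Measure Ω} [IsProbabilityMeasure P] {μ : Measure E} {N : Ω → Measure E}
    (hN : IsPoissonPP P μ N) {A : Set E} (hA : MeasurableSet A) (hfin : μ A ≠ ∞)
    {c : ℝ≥0∞} (hc : c ≠ ∞) :
    ∫⁻ ω, nexp (c * N ω A) ∂P = nexp (epsi c * μ A) := by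
  set lam := (μ A).toReal with hlam
  set q := Real.exp (-c.toReal) with hq
  have hq0 : 0 ≤ q := Real.exp_nonneg _
  have hq1 : q ≤ 1 := by
    rw [hq, ← Real.exp_zero]
    exact Real.exp_le_exp.2 (neg_nonpos.2 ENNReal.toReal_nonneg)
  have hlam0 : 0 ≤ lam := ENNReal.toReal_nonneg
  -- the events
  set Ek : ℕ → Set Ω := fun k => (fun ω => N ω A) ⁻¹' {(k : ℝ≥0∞)} with hEk
  have hmeasN : Measurable fun ω => N ω A := hN.1 A hA
  have hEkm : ∀ k, MeasurableSet (Ek k) := fun k => hmeasN (measurableSet_singleton _)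
  have hdisj : Pairwise (Function.onFun Disjoint Ek) := by
    intro k l hkl
    exact Disjoint.preimage _ (disjoint_singleton.2 (by exact_mod_cast hkl))
  have hPk : ∀ k, P (Ek k) = poissonProb (μ A) k := fun k => hN.2.1 A hA hfin k
  set U := ⋃ k, Ek k with hU
  have hUm : MeasurableSet U := MeasurableSet.iUnion hEkm
  have hPU : P U = 1 := by
    rw [hU, measure_iUnion hdisj hEkm]
    rw [tsum_congr hPk, tsum_poissonProb hfin]
  have hPUc : P Uᶜ = 0 := by
    rw [measure_compl hUm (measure_ne_top P U), hPU, measure_univ, tsub_self]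
  -- split the integral
  have hsplit : ∫⁻ ω, nexp (c * N ω A) ∂P = ∑' k : ℕ, nexp (c * k) * poissonProb (μ A) k := by
    rw [← lintegral_add_compl (fun ω => nexp (c * N ω A)) hUm,
      setLIntegral_measure_zero _ _ hPUc, add_zero, hU,
      lintegral_iUnion hEkm hdisj]
    refine tsum_congr fun k => ?_
    rw [setLIntegral_congr_fun (hEkm k)
      (fun ω (hω : N ω A = (k:ℝ≥0∞)) => by rw [hω])]
    rw [setLIntegral_const, hPk k]
  rw [hsplit]
  -- compute each term
  have hterm : ∀ k : ℕ, nexp (c * k) * poissonProb (μ A) k =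
      ENNReal.ofReal (Real.exp (-lam) * ((q * lam) ^ k / k.factorial)) := by
    intro k
    have hck : c * (k : ℝ≥0∞) ≠ ∞ := ENNReal.mul_ne_top hc (ENNReal.natCast_ne_top k)
    rw [nexp_of_ne_top hck, poissonProb, ← hlam,
      ← ENNReal.ofReal_mul (Real.exp_nonneg _)]
    congr 1
    rw [ENNReal.toReal_mul, ENNReal.toReal_natCast]
    have : -(c.toReal * (k:ℝ)) = (k:ℝ) * (-c.toReal) := by ring
    rw [this, Real.exp_nat_mul, ← hq]
    field_simp
    ring
  rw [tsum_congr hterm]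
  have hsum : Summable fun k : ℕ => Real.exp (-lam) * ((q * lam) ^ k / k.factorial) :=
    (Real.summable_pow_div_factorial (q * lam)).mul_left _
  rw [← ENNReal.ofReal_tsum_of_nonneg (fun k => by positivity) hsum,
    (Real.summable_pow_div_factorial (q * lam)).tsum_mul_left (Real.exp (-lam)),
    ← real_exp_tsum, ← Real.exp_add]
  -- identify with the RHS
  have hec : epsi c = ENNReal.ofReal (1 - q) := if_neg hc
  have hfin' : epsi c * μ A ≠ ∞ :=
    ENNReal.mul_ne_top (lt_of_le_of_lt (epsi_le_one c) ENNReal.one_lt_top).ne hfin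
  rw [nexp_of_ne_top hfin', ENNReal.toReal_mul, hec,
    ENNReal.toReal_ofReal (by linarith), ← hlam]
  congr 2
  ring

lemma lintegral_prod_of_iIndepFun {Ω : Type*} [MeasurableSpace Ω]
    {P : Measure Ω} [IsProbabilityMeasure P] {n : ℕ} {f : Fin n → Ω → ℝ≥0∞}
    (hmeas : ∀ i, Measurable (f i))
    (hind : iIndepFun f P) :
    ∫⁻ ω, ∏ i, f i ω ∂P = ∏ i, ∫⁻ ω, f i ω ∂P := by
  classical
  suffices h : ∀ s : Finset (Fin n),
      ∫⁻ ω, ∏ i ∈ s, f i ω ∂P = ∏ i ∈ s, ∫⁻ ω, f i ω ∂P from h Finset.univ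
  intro s
  induction s using Finset.induction_on with
  | empty => simp
  | @insert i s hi ih =>
    have hindep : IndepFun (f i) (∏ j ∈ s, f j) P :=
      (hind.indepFun_finset_prod_of_notMem hmeas hi).symm
    have hmp : Measurable (∏ j ∈ s, f j) := by
      convert Finset.measurable_prod s (fun j _ => hmeas j) using 1
      exact funext fun ω => Finset.prod_apply ω s f
    have := lintegral_mul_eq_lintegral_mul_lintegral_of_indepFun (hmeas i) hmp hindep
    simp only [Pi.mul_apply, Finset.prod_apply] at this
    simp only [Finset.prod_insert hi]
    rw [this, ih]


section Gen
variable {Ω E : Type*} [MeasurableSpace Ω] [MeasurableSpace E]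
    {P : Measure Ω} [IsProbabilityMeasure P] {μ : Measure E} {N : Ω → Measure E}

lemma laplace_fin (hN : IsPoissonPP P μ N) (n : ℕ) (A : Fin n → Set E)
    (hA : ∀ i, MeasurableSet (A i)) (hd : Pairwise (Function.onFun Disjoint A))
    (c : Fin n → ℝ≥0∞) (hc : ∀ i, c i ≠ ∞) (hfin : ∀ i, c i ≠ 0 → μ (A i) ≠ ∞) :
    ∫⁻ ω, nexp (∑ i, c i * N ω (A i)) ∂P = nexp (∑ i, epsi (c i) * μ (A i)) := by
  have hYmeas : ∀ i, Measurable fun ω => nexp (c i * N ω (A i)) := fun i =>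
    measurable_nexp.comp ((hN.1 (A i) (hA i)).const_mul (c i))
  have hYind : iIndepFun
      (fun i ω => nexp (c i * N ω (A i))) P := by
    have := (hN.2.2 n A hA hd).comp (fun i x => nexp (c i * x))
      (fun i => measurable_nexp.comp (measurable_id.const_mul (c i)))
    exact this
  calc ∫⁻ ω, nexp (∑ i, c i * N ω (A i)) ∂P
      = ∫⁻ ω, ∏ i, nexp (c i * N ω (A i)) ∂P := by
        refine lintegral_congr fun ω => ?_
        exact nexp_sum Finset.univ _
    _ = ∏ i, ∫⁻ ω, nexp (c i * N ω (A i)) ∂P :=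
        lintegral_prod_of_iIndepFun hYmeas hYind
    _ = ∏ i, nexp (epsi (c i) * μ (A i)) := by
        refine Finset.prod_congr rfl fun i _ => ?_
        rcases eq_or_ne (c i) 0 with h0 | h0
        · simp [h0, nexp_zero, epsi_zero, measure_univ]
        · exact mgf_single hN (hA i) (hfin i h0) (hc i)
    _ = nexp (∑ i, epsi (c i) * μ (A i)) := (nexp_sum Finset.univ _).symm

lemma measurable_lintegral_simple (hN : IsPoissonPP P μ N) (φ : SimpleFunc E ℝ≥0∞) :
    Measurable fun ω => ∫⁻ p, φ p ∂(N ω) := by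
  have : (fun ω => ∫⁻ p, φ p ∂(N ω)) =
      fun ω => ∑ x ∈ φ.range, x * N ω (φ ⁻¹' {x}) := by
    funext ω
    rw [SimpleFunc.lintegral_eq_lintegral φ (N ω)]
    rfl
  rw [this]
  exact Finset.measurable_sum _ fun x _ =>
    (hN.1 _ (φ.measurableSet_fiber x)).const_mul x

lemma laplace_simple (hN : IsPoissonPP P μ N) (φ : SimpleFunc E ℝ≥0∞)
    (hval : ∀ x ∈ φ.range, x ≠ ∞)
    (hfin : ∀ x ∈ φ.range, x ≠ 0 → μ (φ ⁻¹' {x}) ≠ ∞) :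
    ∫⁻ ω, nexp (∫⁻ p, φ p ∂(N ω)) ∂P = nexp (∫⁻ p, epsi (φ p) ∂μ) := by
  classical
  set s := φ.range with hs
  set n := s.card with hn
  set e := s.equivFin with he
  set A : Fin n → Set E := fun i => φ ⁻¹' {(e.symm i : ℝ≥0∞)} with hA
  set c : Fin n → ℝ≥0∞ := fun i => (e.symm i : ℝ≥0∞) with hc
  have hAm : ∀ i, MeasurableSet (A i) := fun i => φ.measurableSet_fiber _
  have hd : Pairwise (Function.onFun Disjoint A) := by
    intro i j hij
    refine Disjoint.preimage _ (disjoint_singleton.2 ?_)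
    intro h
    exact hij (e.symm.injective (Subtype.coe_injective h))
  have hcne : ∀ i, c i ≠ ∞ := fun i => hval _ (e.symm i).2
  have hcfin : ∀ i, c i ≠ 0 → μ (A i) ≠ ∞ := fun i h => hfin _ (e.symm i).2 h
  have key := laplace_fin hN n A hAm hd c hcne hcfin
  have h1 : ∀ ω, ∫⁻ p, φ p ∂(N ω) = ∑ i, c i * N ω (A i) := by
    intro ω
    rw [SimpleFunc.lintegral_eq_lintegral φ (N ω)]
    show ∑ x ∈ s, x * N ω (φ ⁻¹' {x}) = _
    rw [← Finset.sum_coe_sort s (fun x => x * N ω (φ ⁻¹' {x}))]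
    exact (Equiv.sum_comp e.symm fun x : s => (x : ℝ≥0∞) * N ω (φ ⁻¹' {(x : ℝ≥0∞)})).symm
  have h2 : ∫⁻ p, epsi (φ p) ∂μ = ∑ i, epsi (c i) * μ (A i) := by
    have : ∫⁻ p, epsi (φ p) ∂μ = (φ.map epsi).lintegral μ := by
      rw [← SimpleFunc.lintegral_eq_lintegral (φ.map epsi) μ]
      exact lintegral_congr fun a => by simp
    rw [this, SimpleFunc.map_lintegral]
    rw [← Finset.sum_coe_sort s (fun x => epsi x * μ (φ ⁻¹' {x}))]
    exact (Equiv.sum_comp e.symm fun x : s => epsi (x : ℝ≥0∞) * μ (φ ⁻¹' {(x : ℝ≥0∞)})).symm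
  rw [h2, ← key]
  exact lintegral_congr fun ω => by rw [h1 ω]


end Gen

section Main

variable {Ω : Type*} [MeasurableSpace Ω] (P : Measure Ω) [IsProbabilityMeasure P]
    (N : Ω → Measure (ℝ × ℝ))
    (hN : IsPoissonPP P (volume.restrict (Ici (0 : ℝ) ×ˢ Ici (0 : ℝ))) N)
    (g : ℝ → ℝ≥0) (hg : Measurable g)

include hN hg in
/-- The master Laplace-functional computation for our specific indicator function. -/
lemma master :
    Measurable (fun ω => ∫⁻ p, (Icc (0:ℝ) 1 ×ˢ Ici (0:ℝ)).indicator
        (fun p => (g p.2 : ℝ≥0∞)) p ∂(N ω)) ∧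
    ∫⁻ ω, epsi (∫⁻ p, (Icc (0:ℝ) 1 ×ˢ Ici (0:ℝ)).indicator
        (fun p => (g p.2 : ℝ≥0∞)) p ∂(N ω)) ∂P
      = epsi (∫⁻ p, epsi ((Icc (0:ℝ) 1 ×ˢ Ici (0:ℝ)).indicator
        (fun p => (g p.2 : ℝ≥0∞)) p) ∂(volume.restrict (Ici (0 : ℝ) ×ˢ Ici (0 : ℝ)))) := by
  set μ : Measure (ℝ × ℝ) := volume.restrict (Ici (0 : ℝ) ×ˢ Ici (0 : ℝ)) with hμ
  set Splus : Set (ℝ × ℝ) := Icc (0:ℝ) 1 ×ˢ Ici (0:ℝ) with hSplus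
  have hSplusm : MeasurableSet Splus := measurableSet_Icc.prod measurableSet_Ici
  set F : ℝ × ℝ → ℝ≥0∞ := Splus.indicator (fun p => (g p.2 : ℝ≥0∞)) with hF
  have hFm : Measurable F :=
    (measurable_coe_nnreal_ennreal.comp (hg.comp measurable_snd)).indicator hSplusm
  -- the truncation sets
  set Sn : ℕ → Set (ℝ × ℝ) := fun n => Icc (0:ℝ) 1 ×ˢ Icc (0:ℝ) n with hSn
  have hSnm : ∀ n, MeasurableSet (Sn n) := fun n => measurableSet_Icc.prod measurableSet_Icc
  have hSnfin : ∀ n, μ (Sn n) ≠ ∞ := by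
    intro n
    have h1 : μ (Sn n) ≤ volume (Sn n) := by
      rw [hμ, Measure.restrict_apply (hSnm n)]
      exact measure_mono inter_subset_left
    have h2 : volume (Sn n) ≠ ∞ := by
      rw [hSn, Measure.volume_eq_prod, Measure.prod_prod, Real.volume_Icc, Real.volume_Icc]
      exact ENNReal.mul_ne_top ENNReal.ofReal_ne_top ENNReal.ofReal_ne_top
    exact (h1.trans_lt h2.lt_top).ne
  -- the simple approximations
  set ind : ℕ → SimpleFunc (ℝ × ℝ) ℝ≥0∞ := fun n =>
    SimpleFunc.piecewise (Sn n) (hSnm n) (SimpleFunc.const _ (∞ : ℝ≥0∞))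
      (SimpleFunc.const _ 0) with hind
  have hind_apply : ∀ n p, ind n p = if p ∈ Sn n then (∞:ℝ≥0∞) else 0 := fun n p => by
    rw [hind, SimpleFunc.piecewise_apply]; split_ifs <;> rfl
  set φ : ℕ → SimpleFunc (ℝ × ℝ) ℝ≥0∞ := fun n => SimpleFunc.eapprox F n ⊓ ind n with hφ
  have hφ_apply : ∀ n p, φ n p = min (SimpleFunc.eapprox F n p) (ind n p) := fun n p =>
    SimpleFunc.inf_apply _ _ _
  have hea_le : ∀ n p, SimpleFunc.eapprox F n p ≤ F p := by
    intro n p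
    rw [← SimpleFunc.iSup_eapprox_apply hFm p]
    exact le_iSup (fun n => SimpleFunc.eapprox F n p) n
  -- values are finite
  have hval : ∀ n, ∀ x ∈ (φ n).range, x ≠ ∞ := by
    intro n x hx
    obtain ⟨p, hp⟩ := SimpleFunc.mem_range.1 hx
    rw [← hp, hφ_apply]
    exact ((min_le_left _ _).trans_lt (SimpleFunc.eapprox_lt_top F n p)).ne
  -- fibers of nonzero values have finite measure
  have hfin : ∀ n, ∀ x ∈ (φ n).range, x ≠ 0 → μ ((φ n) ⁻¹' {x}) ≠ ∞ := by
    intro n x _ hx0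
    have hsub : (φ n) ⁻¹' {x} ⊆ Sn n := by
      intro p hp
      simp only [mem_preimage, mem_singleton_iff] at hp
      by_contra hpn
      rw [hφ_apply, hind_apply, if_neg hpn, min_eq_right zero_le] at hp
      exact hx0 hp.symm
    exact ((measure_mono hsub).trans_lt (hSnfin n).lt_top).ne
  -- monotonicity
  have hmono : ∀ p, Monotone fun n => φ n p := by
    intro p n m hnm
    show φ n p ≤ φ m p
    rw [hφ_apply, hφ_apply]
    refine min_le_min (SimpleFunc.monotone_eapprox F hnm p) ?_
    rw [hind_apply, hind_apply]
    by_cases hp : p ∈ Sn n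
    · have : p ∈ Sn m := by
        refine Set.prod_mono subset_rfl (Icc_subset_Icc le_rfl ?_) hp
        exact_mod_cast Nat.cast_le.2 hnm
      rw [if_pos hp, if_pos this]
    · rw [if_neg hp]; exact zero_le
  have hmono' : Monotone fun n => ⇑(φ n) := fun n m h p => hmono p h
  -- pointwise convergence
  have hsup : ∀ p, ⨆ n, φ n p = F p := by
    intro p
    by_cases hp : p ∈ Splus
    · have h1 : Monotone fun n => SimpleFunc.eapprox F n p :=
        fun n m h => SimpleFunc.monotone_eapprox F h p
      have h2 : Monotone fun n => ind n p := by
        intro n m h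
        show ind n p ≤ ind m p
        rw [hind_apply, hind_apply]
        by_cases hpn : p ∈ Sn n
        · have : p ∈ Sn m := Set.prod_mono subset_rfl
            (Icc_subset_Icc le_rfl (by exact_mod_cast Nat.cast_le.2 h)) hpn
          rw [if_pos hpn, if_pos this]
        · rw [if_neg hpn]; exact zero_le
      have heq : (fun n => φ n p) = fun n => min (SimpleFunc.eapprox F n p) (ind n p) :=
        funext fun n => hφ_apply n p
      rw [heq, iSup_min h1 h2, SimpleFunc.iSup_eapprox_apply hFm p]
      have hindtop : ⨆ n, ind n p = ∞ := by
        refine top_le_iff.1 ?_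
        have hm : p ∈ Sn ⌈p.2⌉₊ := by
          refine ⟨hp.1, hp.2, Nat.le_ceil p.2⟩
        calc (⊤:ℝ≥0∞) = ind ⌈p.2⌉₊ p := by rw [hind_apply, if_pos hm]
          _ ≤ ⨆ n, ind n p := le_iSup (fun n => ind n p) _
      rw [hindtop, min_eq_left le_top]
    · have hFp : F p = 0 := indicator_of_notMem hp _
      refine le_antisymm (iSup_le fun n => ?_) (by rw [hFp]; exact zero_le)
      rw [hφ_apply]
      exact (min_le_left _ _).trans (hea_le n p)
  -- the partial integrals
  set X : ℕ → Ω → ℝ≥0∞ := fun n ω => ∫⁻ p, φ n p ∂(N ω) with hX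
  have hXmeas : ∀ n, Measurable (X n) := fun n => measurable_lintegral_simple hN (φ n)
  have hXmono : Monotone X := fun n m h ω => lintegral_mono fun p => hmono p h
  have hXsup : ∀ ω, ⨆ n, X n ω = ∫⁻ p, F p ∂(N ω) := by
    intro ω
    show ⨆ n, ∫⁻ p, φ n p ∂(N ω) = _
    rw [← lintegral_iSup (fun n => (φ n).measurable) hmono']
    exact lintegral_congr fun p => hsup p
  constructor
  · have : (fun ω => ∫⁻ p, F p ∂(N ω)) = fun ω => ⨆ n, X n ω := funext fun ω => (hXsup ω).symm
    rw [this]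
    exact Measurable.iSup hXmeas
  -- the Laplace computation
  set c : ℕ → ℝ≥0∞ := fun n => ∫⁻ p, epsi (φ n p) ∂μ with hc
  have hlap : ∀ n, ∫⁻ ω, nexp (X n ω) ∂P = nexp (c n) := fun n =>
    laplace_simple hN (φ n) (hval n) (hfin n)
  have hepsi_lap : ∀ n, ∫⁻ ω, epsi (X n ω) ∂P = epsi (c n) := by
    intro n
    have hb : ∫⁻ ω, nexp (X n ω) ∂P ≠ ∞ := by
      refine ((lintegral_mono fun ω => nexp_le_one _).trans_lt ?_).ne
      rw [lintegral_one, measure_univ]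
      exact ENNReal.one_lt_top
    calc ∫⁻ ω, epsi (X n ω) ∂P = ∫⁻ ω, 1 - nexp (X n ω) ∂P :=
          lintegral_congr fun ω => epsi_eq _
      _ = ∫⁻ _, 1 ∂P - ∫⁻ ω, nexp (X n ω) ∂P :=
          lintegral_sub (measurable_nexp.comp (hXmeas n)) hb
            (ae_of_all _ fun ω => nexp_le_one _)
      _ = 1 - nexp (c n) := by rw [lintegral_one, measure_univ, hlap n]
      _ = epsi (c n) := (epsi_eq _).symm
  have hcmono : Monotone c := fun n m h => lintegral_mono fun p => epsi_mono (hmono p h)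
  have hφe : ∀ n, Measurable fun p => epsi (φ n p) := fun n =>
    measurable_epsi.comp (φ n).measurable
  have hcsup : ⨆ n, c n = ∫⁻ p, epsi (F p) ∂μ := by
    calc ⨆ n, c n = ∫⁻ p, ⨆ n, epsi (φ n p) ∂μ :=
        (lintegral_iSup hφe (fun n m h p => epsi_mono (hmono p h))).symm
      _ = ∫⁻ p, epsi (F p) ∂μ :=
        lintegral_congr fun p => by rw [epsi_iSup (hmono p), hsup p]
  calc ∫⁻ ω, epsi (∫⁻ p, F p ∂(N ω)) ∂P
      = ∫⁻ ω, ⨆ n, epsi (X n ω) ∂P := by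
        refine lintegral_congr fun ω => ?_
        rw [epsi_iSup (fun n m h => hXmono h ω), hXsup ω]
    _ = ⨆ n, ∫⁻ ω, epsi (X n ω) ∂P := by
        have hXe : ∀ n, Measurable fun ω => epsi (X n ω) := fun n =>
          measurable_epsi.comp (hXmeas n)
        exact lintegral_iSup hXe (fun n m h ω => epsi_mono (hXmono h ω))
    _ = ⨆ n, epsi (c n) := by simp only [hepsi_lap]
    _ = epsi (⨆ n, c n) := epsi_iSup hcmono
    _ = epsi (∫⁻ p, epsi (F p) ∂μ) := by rw [hcsup]

end Main

section Final
variable {Ω : Type*} [MeasurableSpace Ω] (P : Measure Ω) [IsProbabilityMeasure P]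
    (N : Ω → Measure (ℝ × ℝ))
    (hN : IsPoissonPP P (volume.restrict (Ici (0 : ℝ) ×ˢ Ici (0 : ℝ))) N)
    (g : ℝ → ℝ≥0) (hg : Measurable g)

include hN hg in
theorem final :
    (∫⁻ ω, min 1 (∫⁻ p in Icc (0 : ℝ) 1 ×ˢ (univ : Set ℝ),
        (g p.2 : ℝ≥0∞) ∂(N ω)) ∂P < ∞) ∧
    epsi (∫⁻ y in Ici (0 : ℝ), epsi (g y : ℝ≥0∞))
      ≤ ∫⁻ ω, min 1 (∫⁻ p in Icc (0 : ℝ) 1 ×ˢ (univ : Set ℝ),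
          (g p.2 : ℝ≥0∞) ∂(N ω)) ∂P ∧
    ∫⁻ ω, min 1 (∫⁻ p in Icc (0 : ℝ) 1 ×ˢ (univ : Set ℝ),
        (g p.2 : ℝ≥0∞) ∂(N ω)) ∂P
      ≤ 2 * epsi (∫⁻ y in Ici (0 : ℝ), epsi (g y : ℝ≥0∞)) := by
  obtain ⟨hXmeas, hlap⟩ := master P N hN g hg
  set μ : Measure (ℝ × ℝ) := volume.restrict (Ici (0 : ℝ) ×ˢ Ici (0 : ℝ)) with hμ
  set Splus : Set (ℝ × ℝ) := Icc (0:ℝ) 1 ×ˢ Ici (0:ℝ) with hSplus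
  set Sminus : Set (ℝ × ℝ) := Icc (0:ℝ) 1 ×ˢ Iio (0:ℝ) with hSminus
  have hSplusm : MeasurableSet Splus := measurableSet_Icc.prod measurableSet_Ici
  have hSminusm : MeasurableSet Sminus := measurableSet_Icc.prod measurableSet_Iio
  set F : ℝ × ℝ → ℝ≥0∞ := Splus.indicator (fun p => (g p.2 : ℝ≥0∞)) with hF
  -- the negative strip has measure zero
  have hSm0 : μ Sminus = 0 := by
    rw [hμ, Measure.restrict_apply hSminusm, hSminus, Set.prod_inter_prod]
    have h2 : Iio (0:ℝ) ∩ Ici (0:ℝ) = ∅ := by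
      ext x
      simp only [mem_inter_iff, mem_Iio, mem_Ici, mem_empty_iff_false, iff_false, not_and, not_le]
      exact fun h => h
    rw [h2, Set.prod_empty, measure_empty]
  have hev : ∀ᵐ ω ∂P, N ω Sminus = 0 := by
    have h0 := hN.2.1 Sminus hSminusm (by rw [hSm0]; exact ENNReal.zero_ne_top) 0
    rw [hSm0] at h0
    have h1 : poissonProb 0 0 = 1 := by
      simp [poissonProb]
    rw [h1, Nat.cast_zero] at h0
    have hset : MeasurableSet {ω | N ω Sminus = 0} :=
      hN.1 Sminus hSminusm (measurableSet_singleton (0 : ℝ≥0∞))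
    rw [ae_iff]
    have hcompl : {ω | ¬ N ω Sminus = 0} = {ω | N ω Sminus = 0}ᶜ := rfl
    rw [hcompl, measure_compl hset (measure_ne_top P _), h0, measure_univ, tsub_self]
  -- the integrand in the statement equals the integral of F, a.e.
  have hdisj : Disjoint Splus Sminus := by
    rw [Set.disjoint_left]
    intro p hp hq
    exact absurd (show p.2 < 0 from hq.2) (not_lt.2 hp.2)
  have hcongr : ∀ᵐ ω ∂P, (∫⁻ p in Icc (0 : ℝ) 1 ×ˢ (univ : Set ℝ),
      (g p.2 : ℝ≥0∞) ∂(N ω)) = ∫⁻ p, F p ∂(N ω) := by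
    filter_upwards [hev] with ω hω
    have hsplit : (Icc (0:ℝ) 1 ×ˢ (univ : Set ℝ)) = Splus ∪ Sminus := by
      rw [hSplus, hSminus, ← Set.prod_union, union_comm, Iio_union_Ici]
    rw [hsplit, lintegral_union hSminusm hdisj,
      setLIntegral_measure_zero _ _ hω, add_zero]
    exact (lintegral_indicator hSplusm _).symm
  have hT : ∫⁻ ω, min 1 (∫⁻ p in Icc (0 : ℝ) 1 ×ˢ (univ : Set ℝ),
      (g p.2 : ℝ≥0∞) ∂(N ω)) ∂P = ∫⁻ ω, min 1 (∫⁻ p, F p ∂(N ω)) ∂P :=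
    lintegral_congr_ae (hcongr.mono fun ω h => by simp only [h])
  -- identify the intensity integral
  have hgm : Measurable fun p : ℝ × ℝ => (g p.2 : ℝ≥0∞) :=
    measurable_coe_nnreal_ennreal.comp (hg.comp measurable_snd)
  have hc_eq : ∫⁻ p, epsi (F p) ∂μ = ∫⁻ y in Ici (0:ℝ), epsi (g y : ℝ≥0∞) := by
    have h1 : (fun p => epsi (F p)) =
        Splus.indicator (fun p => epsi ((g p.2 : ℝ≥0∞))) := by
      funext p
      by_cases hp : p ∈ Splus
      · rw [hF, indicator_of_mem hp, indicator_of_mem hp]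
      · rw [hF, indicator_of_notMem hp, indicator_of_notMem hp, epsi_zero]
    rw [h1, lintegral_indicator hSplusm, hμ, Measure.restrict_restrict hSplusm]
    have hQ : Splus ∩ (Ici (0:ℝ) ×ˢ Ici (0:ℝ)) = Splus :=
      inter_eq_left.2 (Set.prod_mono Icc_subset_Ici_self subset_rfl)
    rw [hQ]
    have hprod : (volume : Measure (ℝ × ℝ)).restrict Splus =
        (volume.restrict (Icc (0:ℝ) 1)).prod (volume.restrict (Ici (0:ℝ))) := by
      rw [Measure.prod_restrict, ← Measure.volume_eq_prod, hSplus]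
    have hme : AEMeasurable (fun p : ℝ × ℝ => epsi ((g p.2 : ℝ≥0∞)))
        ((volume.restrict (Icc (0:ℝ) 1)).prod (volume.restrict (Ici (0:ℝ)))) :=
      (measurable_epsi.comp hgm).aemeasurable
    rw [hprod, MeasureTheory.lintegral_prod _ hme]
    have hinner : ∀ x : ℝ, ∫⁻ y, epsi ((g (x, y).2 : ℝ≥0∞)) ∂(volume.restrict (Ici (0:ℝ)))
        = ∫⁻ y in Ici (0:ℝ), epsi (g y : ℝ≥0∞) := fun x => rfl
    simp only [hinner]
    rw [lintegral_const, Measure.restrict_apply_univ, Real.volume_Icc]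
    norm_num
  have hlap' : ∫⁻ ω, epsi (∫⁻ p, F p ∂(N ω)) ∂P
      = epsi (∫⁻ y in Ici (0:ℝ), epsi (g y : ℝ≥0∞)) := by
    rw [← hc_eq]
    exact hlap
  refine ⟨?_, ?_, ?_⟩
  · refine (lintegral_mono fun ω => min_le_left _ _).trans_lt ?_
    rw [lintegral_one, measure_univ]
    exact ENNReal.one_lt_top
  · rw [hT, ← hlap']
    exact lintegral_mono fun ω => epsi_le_min _
  · rw [hT]
    calc ∫⁻ ω, min 1 (∫⁻ p, F p ∂(N ω)) ∂P
        ≤ ∫⁻ ω, 2 * epsi (∫⁻ p, F p ∂(N ω)) ∂P :=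
          lintegral_mono fun ω => min_le_two_epsi _
      _ = 2 * ∫⁻ ω, epsi (∫⁻ p, F p ∂(N ω)) ∂P :=
          lintegral_const_mul 2 (measurable_epsi.comp hXmeas)
      _ = 2 * epsi (∫⁻ y in Ici (0:ℝ), epsi (g y : ℝ≥0∞)) := by rw [hlap']

end Final

end PoissonAux

/-- for a unit-rate Poisson process `{(σ_k, χ_k)}` on `ℝ₊²`
and measurable `g : ℝ₊ → [0,∞)`, with `η g = ∑_k g(χ_k) 1[σ_k ≤ 1]`, the
expectation `E[min(1, η g)]` is finite and is comparable within a factor of 2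
to `ψ(∫ ψ(g(y)) dy)`. -/
theorem expectation_min_one_poisson_sum_comparable
    {Ω : Type*} [MeasurableSpace Ω] (P : Measure Ω) [IsProbabilityMeasure P]
    (N : Ω → Measure (ℝ × ℝ))
    (hN : IsPoissonPP P (volume.restrict (Ici (0 : ℝ) ×ˢ Ici (0 : ℝ))) N)
    (g : ℝ → ℝ≥0) (hg : Measurable g) :
    (∫⁻ ω, min 1 (∫⁻ p in Icc (0 : ℝ) 1 ×ˢ (univ : Set ℝ),
        (g p.2 : ℝ≥0∞) ∂(N ω)) ∂P < ∞) ∧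
    epsi (∫⁻ y in Ici (0 : ℝ), epsi (g y : ℝ≥0∞))
      ≤ ∫⁻ ω, min 1 (∫⁻ p in Icc (0 : ℝ) 1 ×ˢ (univ : Set ℝ),
          (g p.2 : ℝ≥0∞) ∂(N ω)) ∂P ∧
    ∫⁻ ω, min 1 (∫⁻ p in Icc (0 : ℝ) 1 ×ˢ (univ : Set ℝ),
        (g p.2 : ℝ≥0∞) ∂(N ω)) ∂P
      ≤ 2 * epsi (∫⁻ y in Ici (0 : ℝ), epsi (g y : ℝ≥0∞)) := by
  exact PoissonAux.final P N hN g hg
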